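/- Let μ be a probability measure on 𝒳, ν a σ-finite measure on 𝒵, and φ(·,x) a measurable family of probability densities with respect to ν, with mixture density q(z) = ∫ φ(z,x) dμ(x), and suppose I_{χ²}(X,Z) < ∞. Let X_1, …, X_n be i.i.d. with law μ and let q_n(z) = (1/n) Σ_{i=1}^n φ(z, X_i). Then E[ ∫ |q(z) − q_n(z)| dν(z) ] ≤ √(I_{χ²}(X,Z)/n). -/

import Mathlib

open MeasureTheory ProbabilityTheory ENNReal

section Defs

variable {X Z : Type*} [MeasurableSpace X] [MeasurableSpace Z]

/-- Mixture density `q(z) = ∫ φ(z,x) dμ(x)` of the representation `Z`, where `φ(·,x)`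
is the conditional density of `Z` given `X = x` with respect to a reference measure. -/
noncomputable def mixDensity (μ : Measure X) (φ : Z → X → ℝ) (z : Z) : ℝ :=
  ∫ x, φ z x ∂μ

/-- χ²-mutual information
`I_{χ²}(X,Z) = ∫∫ (φ(z,x)/q(z) − 1)² q(z) dν(z) dμ(x)` of a representation given by a
conditional density `φ` with respect to `ν`. -/
noncomputable def chiSqMIKernel (μ : Measure X) (ν : Measure Z) (φ : Z → X → ℝ) : ℝ≥0∞ :=
  ∫⁻ x, ∫⁻ z, ENNReal.ofReal ((φ z x / mixDensity μ φ z - 1) ^ 2 * mixDensity μ φ z) ∂ν ∂μ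

/-- Conditional law of `X` given `S = s`, for a joint law `μ` of `(X,S)`. -/
noncomputable def condX (μ : Measure (X × Bool)) (s : Bool) : Measure X :=
  (μ[|{p | p.2 = s}]).map Prod.fst

/-- Class-conditional law of the representation `Z`: the measure on `𝒵` with density
`z ↦ ∫ φ(z,x) dμ(x)` with respect to `ν`. -/
noncomputable def classLaw (ν : Measure Z) (μ : Measure X) (φ : Z → X → ℝ) : Measure Z :=
  ν.withDensity fun z => ENNReal.ofReal (mixDensity μ φ z)

/-- Empirical mixture density `μ_n(z) = (1/m) Σ_i φ(z, x_i)` built from a sample `D`. -/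
noncomputable def empDensity (φ : Z → X → ℝ) {m : ℕ} (D : Fin m → X) (z : Z) : ℝ :=
  (m : ℝ)⁻¹ * ∑ i, φ z (D i)

/-- Demographic disparity `Δ(f) = |μ¹(A) − μ⁰(A)|` of the test `f = 𝟙_A`. -/
noncomputable def disparity (μ0 μ1 : Measure Z) (A : Set Z) : ℝ :=
  |(μ1 A).toReal - (μ0 A).toReal|

/-- `Δ*`: supremum of the demographic disparity over all measurable binary tests. -/
noncomputable def deltaStar (μ0 μ1 : Measure Z) : ℝ :=
  ⨆ (A : Set Z) (_ : MeasurableSet A), disparity μ0 μ1 A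

end Defs

section Helpers


lemma map_eval_pi {X : Type*} [MeasurableSpace X] (μ : Measure X) [IsProbabilityMeasure μ]
    {n : ℕ} (i : Fin n) :
    (Measure.pi fun _ : Fin n => μ).map (fun D => D i) = μ := by
  classical
  ext s hs
  rw [Measure.map_apply (measurable_pi_apply i) hs]
  rw [show (fun D : Fin n → X => D i) ⁻¹' s
      = Set.pi Set.univ (Function.update (fun _ => Set.univ) i s) from Set.eval_preimage,
    Measure.pi_pi]
  have h : ∀ k, μ (Function.update (fun _ => Set.univ) i s k)
      = Function.update (fun _ : Fin n => (1:ℝ≥0∞)) i (μ s) k := by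
    intro k
    rcases eq_or_ne k i with rfl | hk
    · simp
    · simp [Function.update_of_ne hk]
  simp_rw [h]
  rw [Finset.prod_update_of_mem (Finset.mem_univ i)]
  simp

lemma indepFun_eval_pi {X : Type*} [MeasurableSpace X] (μ : Measure X) [IsProbabilityMeasure μ]
    {n : ℕ} {i j : Fin n} (hij : i ≠ j) :
    IndepFun (fun D : Fin n → X => D i) (fun D : Fin n → X => D j)
      (Measure.pi fun _ : Fin n => μ) := by
  classical
  rw [indepFun_iff_measure_inter_preimage_eq_mul]
  intro s t hs ht
  have hmap : ∀ (k : Fin n) (u : Set X), MeasurableSet u →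
      (Measure.pi fun _ : Fin n => μ) ((fun D : Fin n → X => D k) ⁻¹' u) = μ u := by
    intro k u hu
    rw [← Measure.map_apply (measurable_pi_apply k) hu, map_eval_pi μ k]
  have hset : (fun D : Fin n → X => D i) ⁻¹' s ∩ (fun D : Fin n → X => D j) ⁻¹' t
      = Set.pi Set.univ (Function.update (Function.update (fun _ => Set.univ) i s) j t) := by
    ext D
    simp only [Set.mem_inter_iff, Set.mem_preimage, Set.mem_pi, Set.mem_univ, true_implies]
    constructor
    · rintro ⟨h1, h2⟩ k
      rcases eq_or_ne k j with rfl | hkj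
      · simp [h2]
      · rcases eq_or_ne k i with rfl | hki
        · simp [Function.update_of_ne hkj, h1]
        · simp [Function.update_of_ne hkj, Function.update_of_ne hki]
    · intro h
      refine ⟨?_, ?_⟩
      · have := h i; simpa [Function.update_of_ne hij] using this
      · have := h j; simpa using this
  rw [hset, Measure.pi_pi, hmap i s hs, hmap j t ht]
  have h : ∀ k, μ (Function.update (Function.update (fun _ => Set.univ) i s) j t k)
      = Function.update (Function.update (fun _ : Fin n => (1:ℝ≥0∞)) i (μ s)) j (μ t) k := by
    intro k
    rcases eq_or_ne k j with rfl | hkj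
    · simp
    · rcases eq_or_ne k i with rfl | hki
      · simp [Function.update_of_ne hkj]
      · simp [Function.update_of_ne hkj, Function.update_of_ne hki]
  simp_rw [h]
  rw [Finset.prod_update_of_mem (Finset.mem_univ j),
    Finset.prod_update_of_mem (by simp [hij] : i ∈ Finset.univ \ {j})]
  simp [mul_comm]

lemma integral_eval_pi {X : Type*} [MeasurableSpace X] (μ : Measure X) [IsProbabilityMeasure μ]
    {n : ℕ} (i : Fin n) (h : X → ℝ) (hh : AEStronglyMeasurable h μ) :
    ∫ D : Fin n → X, h (D i) ∂(Measure.pi fun _ : Fin n => μ) = ∫ x, h x ∂μ :=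
  calc ∫ D : Fin n → X, h (D i) ∂(Measure.pi fun _ : Fin n => μ)
      = ∫ x, h x ∂((Measure.pi fun _ : Fin n => μ).map (fun D => D i)) :=
        (integral_map (measurable_pi_apply i).aemeasurable (by rwa [map_eval_pi])).symm
    _ = ∫ x, h x ∂μ := by rw [map_eval_pi]

lemma helper_core {X : Type*} [MeasurableSpace X] (μ : Measure X) [IsProbabilityMeasure μ]
    {n : ℕ} (hn : 1 ≤ n) (f : X → ℝ) (hf : Measurable f) (hf0 : ∀ x, 0 ≤ f x)
    (hfi : ∫⁻ x, ENNReal.ofReal (f x) ∂μ ≠ ⊤) :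
    ∫⁻ D : Fin n → X, ENNReal.ofReal |(∫ x, f x ∂μ) - (n:ℝ)⁻¹ * ∑ i, f (D i)|
        ∂(Measure.pi fun _ : Fin n => μ)
      ≤ ((∫⁻ x, ENNReal.ofReal ((f x - ∫ x, f x ∂μ)^2) ∂μ) / n) ^ (1/2 : ℝ) := by
  classical
  set π : Measure (Fin n → X) := Measure.pi fun _ : Fin n => μ with hπdef
  have hπ : IsProbabilityMeasure π := by infer_instance
  set m : ℝ := ∫ x, f x ∂μ with hm
  have hnR : (n : ℝ) ≠ 0 := by positivity
  by_cases hV : ∫⁻ x, ENNReal.ofReal ((f x - m)^2) ∂μ = ⊤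
  · rw [hV, ENNReal.top_div_of_ne_top (by simp : ((n : ℕ) : ℝ≥0∞) ≠ ⊤),
      ENNReal.top_rpow_of_pos (by norm_num)]
    exact le_top
  -- real variance
  have hfint : Integrable f μ := by
    refine ⟨hf.aestronglyMeasurable, ?_⟩
    rw [hasFiniteIntegral_iff_norm]
    simp_rw [Real.norm_eq_abs, abs_of_nonneg (hf0 _)]
    exact hfi.lt_top
  have hg2int : Integrable (fun x => (f x - m)^2) μ := by
    refine ⟨((hf.sub measurable_const).pow_const 2).aestronglyMeasurable, ?_⟩
    rw [hasFiniteIntegral_iff_norm]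
    simp_rw [Real.norm_eq_abs, abs_pow, sq_abs]
    exact lt_top_iff_ne_top.2 hV
  have hgmem : MemLp (fun x => f x - m) 2 μ :=
    (memLp_two_iff_integrable_sq
      ((hf.sub measurable_const).aestronglyMeasurable)).2 hg2int
  set Y : Fin n → (Fin n → X) → ℝ := fun i D => f (D i) - m with hY
  have hYmeas : ∀ i, Measurable (Y i) :=
    fun i => (hf.comp (measurable_pi_apply i)).sub measurable_const
  have hYmem : ∀ i, MemLp (Y i) 2 π :=
    fun i => hgmem.comp_measurePreserving ⟨measurable_pi_apply i, map_eval_pi μ i⟩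
  have hEg : ∫ x, (f x - m) ∂μ = 0 := by
    rw [integral_sub hfint (integrable_const m)]
    simp [hm]
  have hEY : ∀ i, ∫ D, Y i D ∂π = 0 := by
    intro i
    rw [hY]
    rw [integral_eval_pi μ i (fun x => f x - m) hgmem.aestronglyMeasurable]
    exact hEg
  set Vr : ℝ := ∫ x, (f x - m)^2 ∂μ with hVr
  have hVr0 : 0 ≤ Vr := integral_nonneg fun x => sq_nonneg _
  have hvarY : ∀ i, variance (Y i) π = Vr := by
    intro i
    rw [variance_eq_sub (hYmem i)]
    have h1 : π[(Y i) ^ 2] = Vr := by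
      have := integral_eval_pi μ i (fun x => (f x - m)^2)
        hg2int.aestronglyMeasurable
      simpa [hY] using this
    have h2 : π[Y i] = 0 := hEY i
    rw [h1, h2]
    ring
  have hindep : Set.Pairwise ↑(Finset.univ : Finset (Fin n))
      fun i j => IndepFun (Y i) (Y j) π := by
    intro i _ j _ hij
    exact (indepFun_eval_pi μ hij).comp (hf.sub measurable_const) (hf.sub measurable_const)
  have hWmem : MemLp (∑ i, Y i) 2 π := memLp_finsetSum' _ fun i _ => hYmem i
  have hEW : π[∑ i, Y i] = 0 := by
    have hrw : π[∑ i, Y i] = ∫ D, ∑ i, Y i D ∂π := by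
      simp [Finset.sum_apply]
    rw [hrw, integral_finset_sum _ fun i _ => (hYmem i).integrable one_le_two]
    simp [hEY]
  have hvarW : variance (∑ i, Y i) π = n * Vr := by
    rw [IndepFun.variance_sum (fun i _ => hYmem i) hindep]
    simp [hvarY, Finset.card_univ, mul_comm]
  have hEW2 : π[(∑ i, Y i) ^ 2] = n * Vr := by
    have := variance_eq_sub hWmem
    rw [hEW] at this
    rw [hvarW] at this
    linarith [this]
  have hptw : ∀ D : Fin n → X,
      ENNReal.ofReal |m - (n:ℝ)⁻¹ * ∑ i, f (D i)|
        = ENNReal.ofReal (n:ℝ)⁻¹ * ENNReal.ofReal |∑ i, Y i D| := by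
    intro D
    have h1 : m - (n:ℝ)⁻¹ * ∑ i, f (D i) = -((n:ℝ)⁻¹ * ∑ i, Y i D) := by
      simp only [hY]
      rw [Finset.sum_sub_distrib]
      field_simp
      rw [Finset.sum_const, Finset.card_univ, Fintype.card_fin, nsmul_eq_mul]
      ring
    rw [h1, abs_neg, abs_mul, abs_of_nonneg (by positivity : (0:ℝ) ≤ ((n:ℝ))⁻¹),
      ENNReal.ofReal_mul (by positivity)]
  have hWmeas : Measurable fun D => ∑ i, Y i D := Finset.measurable_sum _ fun i _ => hYmeas i
  have hW2int : Integrable (fun D => (∑ i, Y i D)^2) π := by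
    have := hWmem.integrable_sq
    simpa [Finset.sum_apply] using this
  have hCS : ∫⁻ D, ENNReal.ofReal |∑ i, Y i D| ∂π ≤ ENNReal.ofReal (Real.sqrt (n * Vr)) := by
    have hconj : Real.HolderConjugate 2 2 := Real.HolderConjugate.two_two
    have h := ENNReal.lintegral_mul_le_Lp_mul_Lq π hconj
      (f := fun D => ENNReal.ofReal |∑ i, Y i D|) (g := fun _ => 1)
      (hWmeas.abs.ennreal_ofReal.aemeasurable) aemeasurable_const
    simp only [Pi.mul_apply, mul_one, ENNReal.one_rpow, lintegral_one, measure_univ,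
      ENNReal.one_rpow] at h
    have h2 : ∫⁻ D, (ENNReal.ofReal |∑ i, Y i D|) ^ (2:ℝ) ∂π = ENNReal.ofReal (n * Vr) := by
      have hp : ∀ D, (ENNReal.ofReal |∑ i, Y i D|) ^ (2:ℝ)
          = ENNReal.ofReal ((∑ i, Y i D)^2) := by
        intro D
        rw [ENNReal.ofReal_rpow_of_nonneg (abs_nonneg _) (by norm_num)]
        congr 1
        rw [show ((2:ℝ)) = ((2:ℕ):ℝ) by norm_num, Real.rpow_natCast, sq_abs]
      simp_rw [hp]
      rw [← ofReal_integral_eq_lintegral_ofReal hW2int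
        (Filter.Eventually.of_forall fun D => sq_nonneg _)]
      congr 1
      have hswap : ∫ D, (∑ i, Y i D)^2 ∂π = π[(∑ i, Y i) ^ 2] := by
        simp [Finset.sum_apply]
      rw [hswap, hEW2]
    refine le_trans h ?_
    rw [h2, ENNReal.ofReal_rpow_of_nonneg (by positivity) (by norm_num),
      ← Real.sqrt_eq_rpow]
  calc ∫⁻ D, ENNReal.ofReal |m - (n:ℝ)⁻¹ * ∑ i, f (D i)| ∂π
      = ENNReal.ofReal (n:ℝ)⁻¹ * ∫⁻ D, ENNReal.ofReal |∑ i, Y i D| ∂π := by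
        simp_rw [hptw]
        rw [lintegral_const_mul _ hWmeas.abs.ennreal_ofReal]
    _ ≤ ENNReal.ofReal (n:ℝ)⁻¹ * ENNReal.ofReal (Real.sqrt (n * Vr)) :=
        by gcongr
    _ = ENNReal.ofReal ((n:ℝ)⁻¹ * Real.sqrt (n * Vr)) :=
        (ENNReal.ofReal_mul (by positivity)).symm
    _ = ENNReal.ofReal (Real.sqrt (Vr / n)) := by
        congr 1
        rw [← Real.sqrt_sq (by positivity : (0:ℝ) ≤ ((n:ℝ))⁻¹),
          ← Real.sqrt_mul (sq_nonneg _)]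
        congr 1
        field_simp
    _ = ((∫⁻ x, ENNReal.ofReal ((f x - m)^2) ∂μ) / n) ^ (1/2:ℝ) := by
        rw [← ofReal_integral_eq_lintegral_ofReal hg2int
          (Filter.Eventually.of_forall fun x => sq_nonneg _)]
        rw [Real.sqrt_eq_rpow, ← hVr]
        rw [show ((n:ℕ):ℝ≥0∞) = ENNReal.ofReal ((n:ℕ):ℝ) by rw [ENNReal.ofReal_natCast],
          ← ENNReal.ofReal_div_of_pos (by positivity),
          ENNReal.ofReal_rpow_of_nonneg (by positivity) (by norm_num)]


end Helpers

/-- For a conditional density family `φ` w.r.t. a σ-finite `ν` with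
mixture `q`, finite χ²-mutual information, and `q_n` the empirical mixture of an
i.i.d. sample `X_1, …, X_n ∼ μ`: `E[∫ |q − q_n| dν] ≤ √(I_{χ²}(X,Z)/n)`. -/
theorem statement13 {X Z : Type*} [MeasurableSpace X] [MeasurableSpace Z]
    (μ : Measure X) [IsProbabilityMeasure μ] (ν : Measure Z) [SigmaFinite ν]
    (φ : Z → X → ℝ) (hφm : Measurable (Function.uncurry φ))
    (hφ0 : ∀ z x, 0 ≤ φ z x) (hφ1 : ∀ x, ∫ z, φ z x ∂ν = 1)
    (hI : chiSqMIKernel μ ν φ ≠ ⊤)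
    (n : ℕ) (hn : 1 ≤ n) :
    (∫ D : Fin n → X, (∫ z, |mixDensity μ φ z - empDensity φ D z| ∂ν)
        ∂(Measure.pi fun _ : Fin n => μ)) ≤
      Real.sqrt ((chiSqMIKernel μ ν φ).toReal / n) := by
  classical
  set π : Measure (Fin n → X) := Measure.pi fun _ : Fin n => μ with hπdef
  have hπ : IsProbabilityMeasure π := by infer_instance
  have hnR : (0:ℝ) < (n:ℝ) := by exact_mod_cast hn
  -- section measurability
  have hφmz : ∀ z, Measurable fun x => φ z x :=
    fun z => hφm.comp (measurable_const.prodMk measurable_id)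
  have hφmx : ∀ x, Measurable fun z => φ z x :=
    fun x => hφm.comp (measurable_id.prodMk measurable_const)
  set q : Z → ℝ := mixDensity μ φ with hqdef
  have hq_m : Measurable q :=
    (MeasureTheory.StronglyMeasurable.integral_prod_right
      (hφm.stronglyMeasurable : StronglyMeasurable (Function.uncurry φ))).measurable
  have hq0 : ∀ z, 0 ≤ q z := fun z => integral_nonneg fun x => hφ0 z x
  set Q : Z → ℝ≥0∞ := fun z => ∫⁻ x, ENNReal.ofReal (φ z x) ∂μ with hQdef
  have hQ_m : Measurable Q :=
    Measurable.lintegral_prod_right' (f := fun p : Z × X => ENNReal.ofReal (φ p.1 p.2))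
      hφm.ennreal_ofReal
  set V : Z → ℝ≥0∞ := fun z => ∫⁻ x, ENNReal.ofReal ((φ z x - q z)^2) ∂μ with hVdef
  have hV_m : Measurable V :=
    Measurable.lintegral_prod_right'
      (f := fun p : Z × X => ENNReal.ofReal ((φ p.1 p.2 - q p.1)^2))
      (((hφm.sub (hq_m.comp measurable_fst)).pow_const 2).ennreal_ofReal)
  -- integrability of z-sections
  have hφint : ∀ x, Integrable (fun z => φ z x) ν := by
    intro x
    by_contra h
    have h1 := hφ1 x
    rw [integral_undef h] at h1
    exact zero_ne_one h1
  -- total mass one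
  have hQ1 : ∫⁻ z, Q z ∂ν = 1 := by
    rw [hQdef]
    rw [lintegral_lintegral_swap
      (hφm.ennreal_ofReal.aemeasurable :
        AEMeasurable (Function.uncurry fun z x => ENNReal.ofReal (φ z x)) (ν.prod μ))]
    have : ∀ x, ∫⁻ z, ENNReal.ofReal (φ z x) ∂ν = 1 := by
      intro x
      rw [← ofReal_integral_eq_lintegral_ofReal (hφint x)
        (Filter.Eventually.of_forall fun z => hφ0 z x), hφ1 x, ENNReal.ofReal_one]
    simp_rw [this]
    simp
  have hQfin : ∀ᵐ z ∂ν, Q z < ⊤ := ae_lt_top hQ_m (by rw [hQ1]; exact one_ne_top)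
  have hqQ : ∀ᵐ z ∂ν, ENNReal.ofReal (q z) = Q z := by
    filter_upwards [hQfin] with z hz
    have hint : Integrable (fun x => φ z x) μ := by
      refine ⟨(hφmz z).aestronglyMeasurable, ?_⟩
      rw [hasFiniteIntegral_iff_norm]
      simp_rw [Real.norm_eq_abs, abs_of_nonneg (hφ0 z _)]
      exact hz
    rw [hqdef]
    show ENNReal.ofReal (∫ x, φ z x ∂μ) = Q z
    rw [ofReal_integral_eq_lintegral_ofReal hint (Filter.Eventually.of_forall (hφ0 z))]
  -- key a.e. identity for the chi-square integrand
  have hVQ : ∀ᵐ z ∂ν,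
      (∫⁻ x, ENNReal.ofReal ((φ z x / q z - 1)^2 * q z) ∂μ) = V z / Q z
        ∧ (Q z = 0 → V z = 0) := by
    filter_upwards [hqQ] with z hz
    rcases lt_or_eq_of_le (hq0 z) with hq | hq
    · -- 0 < q z
      have hQ0 : Q z ≠ 0 := by
        rw [← hz]; simp [ENNReal.ofReal_eq_zero, not_le, hq]
      constructor
      · have hrw : ∀ x, ENNReal.ofReal ((φ z x / q z - 1)^2 * q z)
            = ENNReal.ofReal ((φ z x - q z)^2) / ENNReal.ofReal (q z) := by
          intro x
          rw [show (φ z x / q z - 1)^2 * q z = (φ z x - q z)^2 / q z by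
            field_simp]
          exact ENNReal.ofReal_div_of_pos hq
        simp_rw [hrw, div_eq_mul_inv]
        rw [lintegral_mul_const _ (show Measurable fun x => ENNReal.ofReal ((φ z x - q z)^2) from (((hφmz z).sub measurable_const).pow_const 2).ennreal_ofReal)]
        rw [hz, hVdef]
      · intro h0; exact absurd h0 hQ0
    · -- q z = 0
      have hQ0 : Q z = 0 := by rw [← hz, ← hq]; simp
      have hae : ∀ᵐ x ∂μ, ENNReal.ofReal (φ z x) = 0 := by
        have := (lintegral_eq_zero_iff (hφmz z).ennreal_ofReal).1 hQ0
        filter_upwards [this] with x hx using hx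
      have hV0 : V z = 0 := by
        rw [hVdef]
        beta_reduce
        rw [lintegral_eq_zero_iff (show Measurable fun x => ENNReal.ofReal ((φ z x - q z)^2) from (((hφmz z).sub measurable_const).pow_const 2).ennreal_ofReal)]
        filter_upwards [hae] with x hx
        have : φ z x = 0 := le_antisymm (by simpa [ENNReal.ofReal_eq_zero] using hx) (hφ0 z x)
        simp [this, ← hq]
      refine ⟨?_, fun _ => hV0⟩
      rw [hV0, hQ0]
      simp [← hq]
  -- chi-square as a ν-integral
  have hI2 : ∫⁻ z, V z / Q z ∂ν = chiSqMIKernel μ ν φ := by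
    have h1 : Measurable fun p : X × Z => φ p.2 p.1 :=
      hφm.comp (measurable_snd.prodMk measurable_fst)
    have h2 : Measurable fun p : X × Z => q p.2 := hq_m.comp measurable_snd
    have hgm : Measurable fun p : X × Z =>
        ENNReal.ofReal ((φ p.2 p.1 / q p.2 - 1)^2 * q p.2) :=
      ((((h1.div h2).sub measurable_const).pow_const 2).mul h2).ennreal_ofReal
    have hswap : chiSqMIKernel μ ν φ
        = ∫⁻ z, ∫⁻ x, ENNReal.ofReal ((φ z x / q z - 1)^2 * q z) ∂μ ∂ν := by
      show (∫⁻ x, ∫⁻ z, ENNReal.ofReal ((φ z x / q z - 1)^2 * q z) ∂ν ∂μ) = _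
      exact lintegral_lintegral_swap hgm.aemeasurable
    rw [hswap]
    exact lintegral_congr_ae (hVQ.mono fun z h => h.1.symm)
  -- per-z concentration bound
  have hcore : ∀ᵐ z ∂ν,
      ∫⁻ D, ENNReal.ofReal |q z - empDensity φ D z| ∂π ≤ (V z / n) ^ (1/2:ℝ) := by
    filter_upwards [hQfin] with z hz
    exact helper_core μ hn (fun x => φ z x) (hφmz z) (hφ0 z) hz.ne
  -- splitting the square root
  have hsplit : ∀ᵐ z ∂ν,
      (V z / n) ^ (1/2:ℝ) = ((V z / Q z / n) ^ (1/2:ℝ)) * (Q z) ^ (1/2:ℝ) := by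
    filter_upwards [hQfin, hVQ] with z hz h2
    rcases eq_or_ne (Q z) 0 with h0 | h0
    · rw [h0, h2.2 h0]
      simp [ENNReal.zero_rpow_of_pos (by norm_num : (0:ℝ) < 1/2), ENNReal.zero_div]
    · rw [← ENNReal.mul_rpow_of_nonneg _ _ (by norm_num : (0:ℝ) ≤ 1/2)]
      congr 1
      simp only [div_eq_mul_inv]
      rw [mul_right_comm (V z * (Q z)⁻¹) ((n:ℝ≥0∞))⁻¹ (Q z), mul_assoc (V z),
        ENNReal.inv_mul_cancel h0 hz.ne, mul_one]
  -- measurability of the joint integrand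
  have hempm : Measurable fun p : (Fin n → X) × Z => empDensity φ p.1 p.2 := by
    apply Measurable.const_mul
    apply Finset.measurable_sum
    intro i _
    exact hφm.comp (measurable_snd.prodMk ((measurable_pi_apply i).comp measurable_fst))
  have hjm : Measurable fun p : (Fin n → X) × Z =>
      ENNReal.ofReal |q p.2 - empDensity φ p.1 p.2| :=
    (((hq_m.comp measurable_snd).sub hempm).abs).ennreal_ofReal
  -- main lintegral bound
  have main : ∫⁻ D, ∫⁻ z, ENNReal.ofReal |q z - empDensity φ D z| ∂ν ∂π
      ≤ ENNReal.ofReal (Real.sqrt ((chiSqMIKernel μ ν φ).toReal / n)) := by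
    rw [lintegral_lintegral_swap hjm.aemeasurable]
    have hconj : Real.HolderConjugate 2 2 := Real.HolderConjugate.two_two
    have hfA : Measurable fun z => (V z / Q z / n) ^ (1/2:ℝ) :=
      ((hV_m.div hQ_m).div measurable_const).pow_const _
    have hfB : Measurable fun z => (Q z) ^ (1/2:ℝ) := hQ_m.pow_const _
    calc ∫⁻ z, ∫⁻ D, ENNReal.ofReal |q z - empDensity φ D z| ∂π ∂ν
        ≤ ∫⁻ z, (V z / n) ^ (1/2:ℝ) ∂ν := lintegral_mono_ae hcore
      _ = ∫⁻ z, ((V z / Q z / n) ^ (1/2:ℝ)) * (Q z) ^ (1/2:ℝ) ∂ν :=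
          lintegral_congr_ae hsplit
      _ ≤ (∫⁻ z, ((V z / Q z / n) ^ (1/2:ℝ)) ^ (2:ℝ) ∂ν) ^ (1/2:ℝ)
            * (∫⁻ z, ((Q z) ^ (1/2:ℝ)) ^ (2:ℝ) ∂ν) ^ (1/2:ℝ) := by
          have := ENNReal.lintegral_mul_le_Lp_mul_Lq ν hconj
            hfA.aemeasurable hfB.aemeasurable
          simpa [one_div] using this
      _ = (∫⁻ z, V z / Q z / n ∂ν) ^ (1/2:ℝ) * (∫⁻ z, Q z ∂ν) ^ (1/2:ℝ) := by
          have e1 : ∀ x : ℝ≥0∞, (x ^ (1/2:ℝ)) ^ (2:ℝ) = x := fun x => by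
            rw [← ENNReal.rpow_mul]; norm_num
          simp_rw [e1]
      _ = (chiSqMIKernel μ ν φ / n) ^ (1/2:ℝ) := by
          rw [hQ1, ENNReal.one_rpow, mul_one]
          congr 1
          calc ∫⁻ z, V z / Q z / ↑n ∂ν
              = ∫⁻ z, (V z / Q z) * ((n:ℝ≥0∞))⁻¹ ∂ν := by simp_rw [div_eq_mul_inv]
            _ = (∫⁻ z, V z / Q z ∂ν) * ((n:ℝ≥0∞))⁻¹ :=
                lintegral_mul_const _ (hV_m.div hQ_m)
            _ = chiSqMIKernel μ ν φ / ↑n := by rw [hI2, div_eq_mul_inv]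
      _ = ENNReal.ofReal (Real.sqrt ((chiSqMIKernel μ ν φ).toReal / n)) := by
          rw [← ENNReal.ofReal_toReal hI,
            show ((n:ℕ):ℝ≥0∞) = ENNReal.ofReal ((n:ℕ):ℝ) by rw [ENNReal.ofReal_natCast],
            ← ENNReal.ofReal_div_of_pos hnR,
            ENNReal.ofReal_rpow_of_nonneg (by positivity) (by norm_num),
            Real.sqrt_eq_rpow, ENNReal.toReal_ofReal ENNReal.toReal_nonneg]
  -- from Bochner integral to lintegral
  have hpt : ∀ D : Fin n → X,
      ENNReal.ofReal (∫ z, |q z - empDensity φ D z| ∂ν)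
        ≤ ∫⁻ z, ENNReal.ofReal |q z - empDensity φ D z| ∂ν := by
    intro D
    by_cases hD : Integrable (fun z => |q z - empDensity φ D z|) ν
    · rw [ofReal_integral_eq_lintegral_ofReal hD
        (Filter.Eventually.of_forall fun z => abs_nonneg _)]
    · rw [integral_undef hD]
      simp
  set F : (Fin n → X) → ℝ := fun D => ∫ z, |q z - empDensity φ D z| ∂ν with hF
  by_cases hFi : Integrable F π
  · rw [show (∫ D, (∫ z, |q z - empDensity φ D z| ∂ν) ∂π) = ∫ D, F D ∂π from rfl]
    rw [integral_eq_lintegral_of_nonneg_ae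
      (Filter.Eventually.of_forall fun D => integral_nonneg fun z => abs_nonneg _)
      hFi.aestronglyMeasurable]
    have hb : ∫⁻ D, ENNReal.ofReal (F D) ∂π
        ≤ ENNReal.ofReal (Real.sqrt ((chiSqMIKernel μ ν φ).toReal / n)) :=
      le_trans (lintegral_mono hpt) main
    calc (∫⁻ D, ENNReal.ofReal (F D) ∂π).toReal
        ≤ (ENNReal.ofReal (Real.sqrt ((chiSqMIKernel μ ν φ).toReal / n))).toReal :=
          ENNReal.toReal_mono ENNReal.ofReal_ne_top hb
      _ = Real.sqrt ((chiSqMIKernel μ ν φ).toReal / n) :=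
          ENNReal.toReal_ofReal (Real.sqrt_nonneg _)
  · rw [show (∫ D, (∫ z, |q z - empDensity φ D z| ∂ν) ∂π) = ∫ D, F D ∂π from rfl,
      integral_undef hFi]
    exact Real.sqrt_nonneg _
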